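/- Discrete divergence identity for locally divergence-free polynomials: let k ≥ 0 and let Q ≥ 1 be such that the Q-point Gauss–Legendre quadrature on an interval is exact for all polynomials of degree at most k (e.g., Q = k+1). Let R = [x_l, x_r] × [y_b, y_t] be a rectangle with x_l < x_r, y_b < y_t, let {x^μ}_{μ=1}^Q ⊂ [x_l,x_r] and {y^μ}_{μ=1}^Q ⊂ [y_b,y_t] be the affinely mapped Gauss–Legendre nodes, and let {ω_μ}_{μ=1}^Q be the corresponding weights normalized so that Σ_μ ω_μ = 1. If B₁, B₂ are real bivariate polynomials of total degree at most k satisfying ∂B₁/∂x + ∂B₂/∂y ≡ 0 on R, then Σ_{μ=1}^Q ω_μ·[ (B₁(x_r, y^μ) − B₁(x_l, y^μ))/(x_r − x_l) + (B₂(x^μ, y_t) − B₂(x^μ, y_b))/(y_t − y_b) ] = 0. -/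

import Mathlib

open scoped BigOperators

noncomputable section

/-- Evaluation of a bivariate polynomial at the point `(a, b)`. -/
def eval2 (f : MvPolynomial (Fin 2) ℝ) (a b : ℝ) : ℝ := MvPolynomial.eval ![a, b] f

section Aux
open Polynomial MeasureTheory

lemma aux_eval_aeval (g : Fin 2 → Polynomial ℝ) (B : MvPolynomial (Fin 2) ℝ) (t : ℝ) :
    (MvPolynomial.aeval g B).eval t = MvPolynomial.eval (fun i => (g i).eval t) B := by
  induction B using MvPolynomial.induction_on with
  | C a => simp
  | add p q hp hq => simp [hp, hq]
  | mul_X p i hp => simp [hp]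

lemma aux_eval_row (B : MvPolynomial (Fin 2) ℝ) (c t : ℝ) :
    (MvPolynomial.aeval ![Polynomial.C c, Polynomial.X] B).eval t = eval2 B c t := by
  rw [aux_eval_aeval]
  have h : (fun i => Polynomial.eval t (![Polynomial.C c, Polynomial.X] i)) = ![c, t] := by
    funext i; fin_cases i <;> simp
  rw [h, eval2]

lemma aux_eval_col (B : MvPolynomial (Fin 2) ℝ) (c t : ℝ) :
    (MvPolynomial.aeval ![Polynomial.X, Polynomial.C c] B).eval t = eval2 B t c := by
  rw [aux_eval_aeval]
  have h : (fun i => Polynomial.eval t (![Polynomial.X, Polynomial.C c] i)) = ![t, c] := by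
    funext i; fin_cases i <;> simp
  rw [h, eval2]

lemma aux_deriv_aeval (i : Fin 2) (g : Fin 2 → Polynomial ℝ)
    (hg : ∀ j, Polynomial.derivative (g j) = if j = i then 1 else 0)
    (B : MvPolynomial (Fin 2) ℝ) :
    Polynomial.derivative (MvPolynomial.aeval g B)
      = MvPolynomial.aeval g (MvPolynomial.pderiv i B) := by
  induction B using MvPolynomial.induction_on with
  | C a => simp
  | add p q hp hq => simp [hp, hq]
  | mul_X p j hp =>
    simp only [map_mul, Polynomial.derivative_mul, hp, MvPolynomial.pderiv_mul,
      MvPolynomial.pderiv_X, hg j, MvPolynomial.aeval_X, map_add]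
    by_cases h : j = i <;> simp [h, Pi.single_apply, mul_comm]

lemma aux_natDeg_aeval (g : Fin 2 → Polynomial ℝ) (hg : ∀ j, (g j).natDegree ≤ 1)
    (B : MvPolynomial (Fin 2) ℝ) :
    (MvPolynomial.aeval g B).natDegree ≤ B.totalDegree := by
  rw [MvPolynomial.aeval_def, MvPolynomial.eval₂_eq]
  apply Polynomial.natDegree_sum_le_of_forall_le
  intro d hd
  calc (algebraMap ℝ (Polynomial ℝ) (MvPolynomial.coeff d B)
          * ∏ i ∈ d.support, g i ^ d i).natDegree
      ≤ (algebraMap ℝ (Polynomial ℝ) (MvPolynomial.coeff d B)).natDegree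
        + (∏ i ∈ d.support, g i ^ d i).natDegree := Polynomial.natDegree_mul_le
    _ ≤ 0 + ∑ i ∈ d.support, (g i ^ d i).natDegree := by
        gcongr
        · exact le_of_eq (Polynomial.natDegree_C _)
        · exact Polynomial.natDegree_prod_le _ _
    _ ≤ ∑ i ∈ d.support, d i := by
        rw [zero_add]
        apply Finset.sum_le_sum
        intro i _
        calc (g i ^ d i).natDegree ≤ d i * (g i).natDegree := Polynomial.natDegree_pow_le
          _ ≤ d i * 1 := by gcongr; exact hg i
          _ = d i := mul_one _
    _ ≤ B.totalDegree := MvPolynomial.le_totalDegree hd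

lemma aux_cont2 (g : MvPolynomial (Fin 2) ℝ) :
    Continuous fun p : ℝ × ℝ => eval2 g p.1 p.2 := by
  have h : Continuous fun p : ℝ × ℝ => (![p.1, p.2] : Fin 2 → ℝ) := by
    apply continuous_pi
    intro i
    fin_cases i
    · simpa using continuous_fst
    · simpa using continuous_snd
  exact (MvPolynomial.continuous_eval g).comp h

lemma aux_swap_int (a b c d : ℝ) (hab : a ≤ b) (hcd : c ≤ d) (f : ℝ → ℝ → ℝ)
    (hf : Continuous fun p : ℝ × ℝ => f p.1 p.2) :
    ∫ s in a..b, ∫ t in c..d, f s t = ∫ t in c..d, ∫ s in a..b, f s t := by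
  rw [intervalIntegral.integral_of_le hab, intervalIntegral.integral_of_le hcd]
  simp_rw [intervalIntegral.integral_of_le hab, intervalIntegral.integral_of_le hcd]
  apply MeasureTheory.integral_integral_swap
  rw [Measure.prod_restrict]
  have hcpt : IsCompact (Set.Icc a b ×ˢ Set.Icc c d) := isCompact_Icc.prod isCompact_Icc
  have hI : IntegrableOn (fun p : ℝ × ℝ => f p.1 p.2) (Set.Icc a b ×ˢ Set.Icc c d) :=
    hf.continuousOn.integrableOn_compact hcpt
  exact hI.mono_set (Set.prod_mono Set.Ioc_subset_Icc_self Set.Ioc_subset_Icc_self)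

lemma aux_ftc_x (B : MvPolynomial (Fin 2) ℝ) (a b t : ℝ) :
    eval2 B b t - eval2 B a t = ∫ s in a..b, eval2 (MvPolynomial.pderiv 0 B) s t := by
  set p := MvPolynomial.aeval ![Polynomial.X, Polynomial.C t] B with hp
  have hd : Polynomial.derivative p
      = MvPolynomial.aeval ![Polynomial.X, Polynomial.C t] (MvPolynomial.pderiv 0 B) := by
    apply aux_deriv_aeval
    intro j; fin_cases j <;> simp
  have hint : ∫ s in a..b, (Polynomial.derivative p).eval s = p.eval b - p.eval a :=
    intervalIntegral.integral_eq_sub_of_hasDerivAt (fun x _ => p.hasDerivAt x)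
      ((Polynomial.derivative p).continuous.intervalIntegrable a b)
  rw [show p.eval b = eval2 B b t from aux_eval_col B t b,
    show p.eval a = eval2 B a t from aux_eval_col B t a] at hint
  rw [← hint]
  apply intervalIntegral.integral_congr
  intro s _
  show (Polynomial.derivative p).eval s = eval2 (MvPolynomial.pderiv 0 B) s t
  rw [hd, aux_eval_col]

lemma aux_ftc_y (B : MvPolynomial (Fin 2) ℝ) (a b s : ℝ) :
    eval2 B s b - eval2 B s a = ∫ t in a..b, eval2 (MvPolynomial.pderiv 1 B) s t := by
  set p := MvPolynomial.aeval ![Polynomial.C s, Polynomial.X] B with hp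
  have hd : Polynomial.derivative p
      = MvPolynomial.aeval ![Polynomial.C s, Polynomial.X] (MvPolynomial.pderiv 1 B) := by
    apply aux_deriv_aeval
    intro j; fin_cases j <;> simp
  have hint : ∫ t in a..b, (Polynomial.derivative p).eval t = p.eval b - p.eval a :=
    intervalIntegral.integral_eq_sub_of_hasDerivAt (fun x _ => p.hasDerivAt x)
      ((Polynomial.derivative p).continuous.intervalIntegrable a b)
  rw [show p.eval b = eval2 B s b from aux_eval_row B s b,
    show p.eval a = eval2 B s a from aux_eval_row B s a] at hint
  rw [← hint]
  apply intervalIntegral.integral_congr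
  intro u _
  show (Polynomial.derivative p).eval u = eval2 (MvPolynomial.pderiv 1 B) s u
  rw [hd, aux_eval_row]

end Aux

/-- **discrete divergence identity for locally divergence-free polynomials.** -/
theorem discrete_divergence_identity (k Q : ℕ) (hQ : 1 ≤ Q)
    (xl xr yb yt : ℝ) (hx : xl < xr) (hy : yb < yt)
    (xn yn w : Fin Q → ℝ)
    (hxn : ∀ μ, xn μ ∈ Set.Icc xl xr) (hyn : ∀ μ, yn μ ∈ Set.Icc yb yt)
    (hwsum : ∑ μ, w μ = 1)
    (hExactX : ∀ p : Polynomial ℝ, p.natDegree ≤ k →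
      ∑ μ, w μ * p.eval (xn μ) = (∫ t in xl..xr, p.eval t) / (xr - xl))
    (hExactY : ∀ p : Polynomial ℝ, p.natDegree ≤ k →
      ∑ μ, w μ * p.eval (yn μ) = (∫ t in yb..yt, p.eval t) / (yt - yb))
    (B1 B2 : MvPolynomial (Fin 2) ℝ)
    (hB1 : B1.totalDegree ≤ k) (hB2 : B2.totalDegree ≤ k)
    (hdf : ∀ x y : ℝ, x ∈ Set.Icc xl xr → y ∈ Set.Icc yb yt →
      eval2 (MvPolynomial.pderiv 0 B1 + MvPolynomial.pderiv 1 B2) x y = 0) :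
    ∑ μ, w μ * ((eval2 B1 xr (yn μ) - eval2 B1 xl (yn μ)) / (xr - xl)
      + (eval2 B2 (xn μ) yt - eval2 B2 (xn μ) yb) / (yt - yb)) = 0 := by
  have hΔx : xr - xl ≠ 0 := sub_ne_zero.mpr hx.ne'
  have hΔy : yt - yb ≠ 0 := sub_ne_zero.mpr hy.ne'
  set D : MvPolynomial (Fin 2) ℝ := MvPolynomial.pderiv 0 B1 + MvPolynomial.pderiv 1 B2 with hD
  -- Step 1: D vanishes identically
  have key1 : ∀ t ∈ Set.Icc yb yt, ∀ s : ℝ, eval2 D s t = 0 := by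
    intro t ht s
    have hz : MvPolynomial.aeval ![Polynomial.X, Polynomial.C t] D = 0 := by
      apply Polynomial.eq_zero_of_infinite_isRoot
      apply (Set.Icc_infinite hx).mono
      intro u hu
      show Polynomial.IsRoot _ u
      rw [Polynomial.IsRoot, aux_eval_col]
      exact hdf u t hu ht
    have := aux_eval_col D t s
    rw [hz] at this
    simpa using this.symm
  have key : ∀ s t : ℝ, eval2 D s t = 0 := by
    intro s t
    have hz : MvPolynomial.aeval ![Polynomial.C s, Polynomial.X] D = 0 := by
      apply Polynomial.eq_zero_of_infinite_isRoot
      apply (Set.Icc_infinite hy).mono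
      intro u hu
      show Polynomial.IsRoot _ u
      rw [Polynomial.IsRoot, aux_eval_row]
      exact key1 u hu s
    have := aux_eval_row D s t
    rw [hz] at this
    simpa using this.symm
  have hDpt : ∀ s t : ℝ, eval2 (MvPolynomial.pderiv 0 B1) s t
      = - eval2 (MvPolynomial.pderiv 1 B2) s t := by
    intro s t
    have := key s t
    rw [hD] at this
    simp only [eval2, map_add] at this ⊢
    linarith
  -- the two one-variable boundary polynomials
  set q : Polynomial ℝ := MvPolynomial.aeval ![Polynomial.C xr, Polynomial.X] B1
      - MvPolynomial.aeval ![Polynomial.C xl, Polynomial.X] B1 with hq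
  set r : Polynomial ℝ := MvPolynomial.aeval ![Polynomial.X, Polynomial.C yt] B2
      - MvPolynomial.aeval ![Polynomial.X, Polynomial.C yb] B2 with hr
  have hgdeg : ∀ c : ℝ, ∀ j : Fin 2, ((![Polynomial.C c, Polynomial.X] : Fin 2 → Polynomial ℝ) j).natDegree ≤ 1 := by
    intro c j; fin_cases j <;> simp
  have hgdeg' : ∀ c : ℝ, ∀ j : Fin 2, ((![Polynomial.X, Polynomial.C c] : Fin 2 → Polynomial ℝ) j).natDegree ≤ 1 := by
    intro c j; fin_cases j <;> simp
  have hqdeg : q.natDegree ≤ k :=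
    le_trans (Polynomial.natDegree_sub_le _ _)
      (max_le (le_trans (aux_natDeg_aeval _ (hgdeg xr) B1) hB1)
        (le_trans (aux_natDeg_aeval _ (hgdeg xl) B1) hB1))
  have hrdeg : r.natDegree ≤ k :=
    le_trans (Polynomial.natDegree_sub_le _ _)
      (max_le (le_trans (aux_natDeg_aeval _ (hgdeg' yt) B2) hB2)
        (le_trans (aux_natDeg_aeval _ (hgdeg' yb) B2) hB2))
  have hqe : ∀ t : ℝ, q.eval t = eval2 B1 xr t - eval2 B1 xl t := by
    intro t; rw [hq, Polynomial.eval_sub, aux_eval_row, aux_eval_row]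
  have hre : ∀ s : ℝ, r.eval s = eval2 B2 s yt - eval2 B2 s yb := by
    intro s; rw [hr, Polynomial.eval_sub, aux_eval_col, aux_eval_col]
  -- rewrite the sum
  have hsplit : ∑ μ, w μ * ((eval2 B1 xr (yn μ) - eval2 B1 xl (yn μ)) / (xr - xl)
      + (eval2 B2 (xn μ) yt - eval2 B2 (xn μ) yb) / (yt - yb))
      = (∑ μ, w μ * q.eval (yn μ)) / (xr - xl) + (∑ μ, w μ * r.eval (xn μ)) / (yt - yb) := by
    rw [Finset.sum_div, Finset.sum_div, ← Finset.sum_add_distrib]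
    apply Finset.sum_congr rfl
    intro μ _
    rw [hqe, hre]
    field_simp
  rw [hsplit, hExactY q hqdeg, hExactX r hrdeg]
  -- the two integrals sum to zero
  have hqint : ∀ t : ℝ, q.eval t = - ∫ s in xl..xr, eval2 (MvPolynomial.pderiv 1 B2) s t := by
    intro t
    rw [hqe, aux_ftc_x B1 xl xr t]
    rw [← intervalIntegral.integral_neg]
    apply intervalIntegral.integral_congr
    intro s _
    exact hDpt s t
  have hrint : ∀ s : ℝ, r.eval s = ∫ t in yb..yt, eval2 (MvPolynomial.pderiv 1 B2) s t := by
    intro s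
    rw [hre, aux_ftc_y B2 yb yt s]
  have hswap : ∫ s in xl..xr, ∫ t in yb..yt, eval2 (MvPolynomial.pderiv 1 B2) s t
      = ∫ t in yb..yt, ∫ s in xl..xr, eval2 (MvPolynomial.pderiv 1 B2) s t :=
    aux_swap_int xl xr yb yt hx.le hy.le _ (aux_cont2 _)
  have hsum0 : (∫ t in yb..yt, q.eval t) + (∫ s in xl..xr, r.eval s) = 0 := by
    have h1 : ∫ t in yb..yt, q.eval t
        = - ∫ t in yb..yt, ∫ s in xl..xr, eval2 (MvPolynomial.pderiv 1 B2) s t := by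
      rw [← intervalIntegral.integral_neg]
      apply intervalIntegral.integral_congr
      intro t _
      simpa using hqint t
    have h2 : ∫ s in xl..xr, r.eval s
        = ∫ t in yb..yt, ∫ s in xl..xr, eval2 (MvPolynomial.pderiv 1 B2) s t := by
      rw [← hswap]
      apply intervalIntegral.integral_congr
      intro s _
      exact hrint s
    rw [h1, h2]; ring
  have hA : (∫ t in yb..yt, q.eval t) = - ∫ s in xl..xr, r.eval s := by linarith [hsum0]
  rw [hA]
  ring
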